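/- Suppose there are r sequences of closed intervals I_{i,m} = [a_{i,m}, b_{i,m}] ⊆ ℝ (i = 1,…,r, m ≥ 1) such that for each i either (a) b_{i,m} ≤ D for all m, or (b) there is ā_i ≥ a > 0 with m·ā_i − D ≤ a_{i,m} and b_{i,m} ≤ m·ā_i + D for all m. Then for every real d > D, the total number of pairs (i,m) with d ∈ I_{i,m} is at most r·⌊1 + 2D/a⌋. -/

import Mathlib

theorem stmt11 (r : ℕ) (a D : ℝ) (ha : 0 < a) (hD : 0 ≤ D)
    (A B : Fin r → ℕ → ℝ)
    (hAB : ∀ i : Fin r,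
      (∀ m : ℕ, 1 ≤ m → B i m ≤ D) ∨
      (∃ abar : ℝ, a ≤ abar ∧ ∀ m : ℕ, 1 ≤ m →
        (m : ℝ) * abar - D ≤ A i m ∧ B i m ≤ (m : ℝ) * abar + D)) :
    ∀ d : ℝ, D < d →
      {p : Fin r × ℕ | 1 ≤ p.2 ∧ A p.1 p.2 ≤ d ∧ d ≤ B p.1 p.2}.Finite ∧
      {p : Fin r × ℕ | 1 ≤ p.2 ∧ A p.1 p.2 ≤ d ∧ d ≤ B p.1 p.2}.ncard
        ≤ r * ⌊1 + 2 * D / a⌋₊ := by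
  classical
  intro d hd
  set S : Set (Fin r × ℕ) :=
    {p : Fin r × ℕ | 1 ≤ p.2 ∧ A p.1 p.2 ≤ d ∧ d ≤ B p.1 p.2} with hS
  set N : ℕ := ⌊(d + D) / a⌋₊ with hN
  -- every element of S has second coordinate ≤ N
  have hmem : ∀ p : Fin r × ℕ, p ∈ S → p.2 ≤ N := by
    rintro ⟨i, m⟩ ⟨hm1, hA, hB⟩
    rcases hAB i with h | ⟨abar, habar, h⟩
    · exact absurd (hB.trans (h m hm1)) (not_le.2 hd)
    · have habar0 : 0 < abar := lt_of_lt_of_le ha habar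
      have h1 : (m : ℝ) * abar ≤ d + D := by
        have := (h m hm1).1
        linarith
      have h2 : (m : ℝ) * a ≤ d + D := by
        have : (m : ℝ) * a ≤ (m : ℝ) * abar := by
          apply mul_le_mul_of_nonneg_left habar (by positivity)
        linarith
      have : (m : ℝ) ≤ (d + D) / a := by
        rw [le_div_iff₀ ha]; exact h2
      exact Nat.le_floor this
  set T : Finset (Fin r × ℕ) :=
    (Finset.univ ×ˢ Finset.Icc 1 N).filter
      (fun p => 1 ≤ p.2 ∧ A p.1 p.2 ≤ d ∧ d ≤ B p.1 p.2) with hT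
  have hST : S = ↑T := by
    ext p
    simp only [hT, Finset.coe_filter, Finset.mem_product, Finset.mem_univ,
      Finset.mem_Icc, Set.mem_setOf_eq, true_and]
    constructor
    · intro hp
      exact ⟨⟨hp.1, hmem p hp⟩, hp⟩
    · intro hp
      exact hp.2
  constructor
  · rw [hST]; exact T.finite_toSet
  · rw [hST, Set.ncard_coe_finset]
    -- fiberwise count
    have hcard : T.card = ∑ i : Fin r, (T.filter (fun p => p.1 = i)).card := by
      exact Finset.card_eq_sum_card_fiberwise (fun p _ => Finset.mem_univ p.1)
    rw [hcard]
    have hbound : ∀ i : Fin r,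
        (T.filter (fun p => p.1 = i)).card ≤ ⌊1 + 2 * D / a⌋₊ := by
      intro i
      rcases hAB i with h | ⟨abar, habar, h⟩
      · have : T.filter (fun p => p.1 = i) = ∅ := by
          apply Finset.filter_eq_empty_iff.2
          rintro ⟨j, m⟩ hp hji
          simp only [hT, Finset.mem_filter] at hp
          obtain ⟨-, hm1, -, hB⟩ := hp
          subst hji
          exact absurd (hB.trans (h m hm1)) (not_le.2 hd)
        simp [this]
      · have habar0 : 0 < abar := lt_of_lt_of_le ha habar
        set lo : ℕ := ⌈(d - D) / abar⌉₊ with hlo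
        set hi : ℕ := ⌊(d + D) / abar⌋₊ with hhi
        have hsub : (T.filter (fun p => p.1 = i)).card ≤ (Finset.Icc lo hi).card := by
          apply Finset.card_le_card_of_injOn Prod.snd
          · rintro ⟨j, m⟩ hp
            simp only [hT, Finset.mem_coe, Finset.mem_filter] at hp
            obtain ⟨⟨-, hm1, hA', hB'⟩, hji⟩ := hp
            subst hji
            have hm1' : 1 ≤ m := hm1
            have h1 : (m : ℝ) * abar - D ≤ d := le_trans (h m hm1').1 hA'
            have h2 : d ≤ (m : ℝ) * abar + D := le_trans hB' (h m hm1').2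
            simp only [Finset.mem_coe, Finset.mem_Icc]
            constructor
            · rw [hlo]
              apply Nat.ceil_le.2
              rw [div_le_iff₀ habar0]
              linarith
            · apply Nat.le_floor
              rw [le_div_iff₀ habar0]
              linarith
          · rintro ⟨j1, m1⟩ hp1 ⟨j2, m2⟩ hp2 hm
            simp only [hT, Finset.mem_filter, Finset.mem_coe] at hp1 hp2
            simp only [Prod.mk.injEq]
            exact ⟨hp1.2.trans hp2.2.symm, hm⟩
        refine hsub.trans ?_
        rw [Nat.card_Icc]
        rcases le_or_gt lo (hi + 1) with hle | hlt
        · apply Nat.le_floor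
          rw [Nat.cast_sub hle]
          push_cast
          have h1 : (hi : ℝ) ≤ (d + D) / abar :=
            Nat.floor_le (div_nonneg (by linarith) habar0.le)
          have h2 : (d - D) / abar ≤ (lo : ℝ) := Nat.le_ceil _
          have h3 : 2 * D / abar ≤ 2 * D / a :=
            div_le_div_of_nonneg_left (by linarith) ha habar
          have h4 : (d + D) / abar - (d - D) / abar = 2 * D / abar := by
            field_simp; ring
          linarith
        · have : hi + 1 - lo = 0 := Nat.sub_eq_zero_of_le (le_of_lt hlt)
          simp [this]
    calc ∑ i : Fin r, (T.filter (fun p => p.1 = i)).card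
        ≤ ∑ _i : Fin r, ⌊1 + 2 * D / a⌋₊ := Finset.sum_le_sum (fun i _ => hbound i)
      _ = r * ⌊1 + 2 * D / a⌋₊ := by simp [Finset.sum_const, mul_comm]
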